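/- Let r, s, k, l, m be nonnegative integers with m ≤ r and s = k + l. Then N(r,s;m,k,l,0) = N(r,s;m,l,k,0). -/
import Mathlib


open Finset

/-- The Mixed Generalized Gaussian Number `N(α,β;k₀,k₁,k₂,k₃)`. -/
def MGN (a b k₀ k₁ k₂ k₃ : ℕ) : ℚ :=
  ((∏ i ∈ range k₀, ((2 ^ a - 2 ^ i : ℚ) * 2 ^ b)) *
   (∏ i ∈ range k₁, ((8 ^ b - 4 ^ b * 2 ^ i : ℚ) * 2 ^ a)) *
   (∏ i ∈ range k₂, ((4 ^ b - 2 ^ (b + k₁ + i) : ℚ) * 2 ^ a)) *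
   (∏ i ∈ range k₃, (2 ^ b - 2 ^ (k₁ + k₂ + i) : ℚ))) /
  ((∏ i ∈ range k₀, (2 ^ (k₀ + k₁ + k₂ + k₃) - 2 ^ (k₁ + k₂ + k₃ + i) : ℚ)) *
   (∏ i ∈ range k₁, ((8 ^ k₁ - 4 ^ k₁ * 2 ^ i : ℚ) * 2 ^ (k₀ + 2 * k₂ + k₃))) *
   (∏ i ∈ range k₂, ((4 ^ k₂ - 2 ^ (k₂ + i) : ℚ) * 2 ^ (k₀ + 2 * k₁ + k₃))) *
   (∏ i ∈ range k₃, (2 ^ (k₁ + k₂ + k₃) - 2 ^ (k₁ + k₂ + i) : ℚ)))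

lemma prodA (s c k : ℕ) :
    (∏ i ∈ range k, ((8 ^ s - 4 ^ s * 2 ^ i : ℚ) * 2 ^ c)) =
      2 ^ ((2 * s + c) * k) * ∏ i ∈ range k, ((2 : ℚ) ^ s - 2 ^ i) := by
  calc (∏ i ∈ range k, ((8 ^ s - 4 ^ s * 2 ^ i : ℚ) * 2 ^ c))
      = ∏ i ∈ range k, ((2 : ℚ) ^ (2 * s + c) * ((2 : ℚ) ^ s - 2 ^ i)) :=
        Finset.prod_congr rfl fun i _ => by
          rw [show (8 : ℚ) = 2 ^ 3 by norm_num, show (4 : ℚ) = 2 ^ 2 by norm_num,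
            ← pow_mul, ← pow_mul]
          ring
    _ = _ := by
        rw [Finset.prod_mul_distrib, Finset.prod_const, card_range, ← pow_mul]

lemma prodB (s c q n : ℕ) :
    (∏ i ∈ range n, ((4 ^ s - 2 ^ (s + q + i) : ℚ) * 2 ^ c)) =
      2 ^ ((s + c) * n) * ∏ i ∈ range n, ((2 : ℚ) ^ s - 2 ^ (q + i)) := by
  calc (∏ i ∈ range n, ((4 ^ s - 2 ^ (s + q + i) : ℚ) * 2 ^ c))
      = ∏ i ∈ range n, ((2 : ℚ) ^ (s + c) * ((2 : ℚ) ^ s - 2 ^ (q + i))) :=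
        Finset.prod_congr rfl fun i _ => by
          rw [show (4 : ℚ) = 2 ^ 2 by norm_num, ← pow_mul]
          ring
    _ = _ := by
        rw [Finset.prod_mul_distrib, Finset.prod_const, card_range, ← pow_mul]

lemma prodD (n c : ℕ) :
    (∏ i ∈ range n, ((4 ^ n - 2 ^ (n + i) : ℚ) * 2 ^ c)) =
      2 ^ ((n + c) * n) * ∏ i ∈ range n, ((2 : ℚ) ^ n - 2 ^ i) := by
  calc (∏ i ∈ range n, ((4 ^ n - 2 ^ (n + i) : ℚ) * 2 ^ c))
      = ∏ i ∈ range n, ((2 : ℚ) ^ (n + c) * ((2 : ℚ) ^ n - 2 ^ i)) :=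
        Finset.prod_congr rfl fun i _ => by
          rw [show (4 : ℚ) = 2 ^ 2 by norm_num, ← pow_mul]
          ring
    _ = _ := by
        rw [Finset.prod_mul_distrib, Finset.prod_const, card_range, ← pow_mul]

/-- Symmetry of the Mixed Generalized Gaussian Number: `N(r,s;m,k,l,0) = N(r,s;m,l,k,0)`
when `s = k + l`. -/
theorem MGN_swap (r s k l m : ℕ) (hm : m ≤ r) (hs : s = k + l) :
    MGN r s m k l 0 = MGN r s m l k 0 := by
  subst hs
  unfold MGN
  simp only [prod_range_zero, mul_one, add_zero]
  rw [show m + l + k = m + k + l from by omega]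
  simp only [Nat.add_comm l k]
  rw [prodA (k + l) r k, prodA (k + l) r l, prodB (k + l) r k l, prodB (k + l) r l k,
    prodA k (m + 2 * l) k, prodA l (m + 2 * k) l, prodD l (m + 2 * k), prodD k (m + 2 * l)]
  have hm1 : (∏ i ∈ range k, ((2 : ℚ) ^ (k + l) - 2 ^ i)) *
      (∏ i ∈ range l, ((2 : ℚ) ^ (k + l) - 2 ^ (k + i))) =
      ∏ i ∈ range (k + l), ((2 : ℚ) ^ (k + l) - 2 ^ i) :=
    (Finset.prod_range_add (fun i => (2 : ℚ) ^ (k + l) - 2 ^ i) k l).symm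
  have hm2 : (∏ i ∈ range l, ((2 : ℚ) ^ (k + l) - 2 ^ i)) *
      (∏ i ∈ range k, ((2 : ℚ) ^ (k + l) - 2 ^ (l + i))) =
      ∏ i ∈ range (k + l), ((2 : ℚ) ^ (k + l) - 2 ^ i) := by
    have h := (Finset.prod_range_add (fun i => (2 : ℚ) ^ (k + l) - 2 ^ i) l k).symm
    rwa [Nat.add_comm l k] at h
  have ne2 : ∀ n : ℕ, ((2 : ℚ) ^ n) ≠ 0 := fun n => pow_ne_zero n two_ne_zero
  have hG : ∀ n : ℕ, (∏ i ∈ range n, ((2 : ℚ) ^ n - 2 ^ i)) ≠ 0 := fun n =>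
    Finset.prod_ne_zero_iff.mpr fun i hi =>
      sub_ne_zero_of_ne (pow_lt_pow_right₀ one_lt_two (mem_range.mp hi)).ne'
  have hD : (∏ i ∈ range m, ((2 : ℚ) ^ (m + k + l) - 2 ^ (k + l + i))) ≠ 0 :=
    Finset.prod_ne_zero_iff.mpr fun i hi =>
      sub_ne_zero_of_ne (pow_lt_pow_right₀ one_lt_two
        (by have := mem_range.mp hi; omega)).ne'
  rw [div_eq_div_iff
    (mul_ne_zero (mul_ne_zero hD (mul_ne_zero (ne2 _) (hG k))) (mul_ne_zero (ne2 _) (hG l)))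
    (mul_ne_zero (mul_ne_zero hD (mul_ne_zero (ne2 _) (hG l))) (mul_ne_zero (ne2 _) (hG k)))]
  set A := ∏ i ∈ range m, ((2 ^ r - 2 ^ i : ℚ) * 2 ^ (k + l)) with hA
  set D := ∏ i ∈ range m, ((2 : ℚ) ^ (m + k + l) - 2 ^ (k + l + i)) with hDdef
  set g1 := ∏ i ∈ range k, ((2 : ℚ) ^ k - 2 ^ i) with hg1
  set g2 := ∏ i ∈ range l, ((2 : ℚ) ^ l - 2 ^ i) with hg2
  linear_combination
    (A * D * g1 * g2 *
      (2 : ℚ) ^ ((2 * (k + l) + r) * k + ((k + l) + r) * l +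
        ((2 * l + (m + 2 * k)) * l + (k + (m + 2 * l)) * k))) * hm1 -
    (A * D * g1 * g2 *
      (2 : ℚ) ^ ((2 * (k + l) + r) * l + ((k + l) + r) * k +
        ((2 * k + (m + 2 * l)) * k + (l + (m + 2 * k)) * l))) * hm2
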